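/- Let Φ̃ be the affine root system of an untwisted affine Kac–Moody algebra with irreducible finite root system Φ. There exists κ ∈ ℕ such that for all w ∈ W̃ and every real root β = α + iδ ∈ Φ̃₊ ∩ wΦ̃₋ (α ∈ Φ, i ∈ ℤ≥0), one has 0 ≤ i < κ ℓ(w). -/

import Mathlib

/-!
STATEMENT 12: Let `Φ̃` be the affine root system of an untwisted affine
Kac–Moody algebra with irreducible finite root system `Φ`.  There exists
`κ ∈ ℕ` such that for all `w ∈ W̃` and every real root
`β = α + iδ ∈ Φ̃₊ ∩ wΦ̃₋` (`α ∈ Φ`, `i ∈ ℤ≥0`) one has `0 ≤ i < κ ℓ(w)`.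

Setup as in Statement 11: `W̃` is realized as the group of permutations of
`V` generated by the simple affine reflections, with word length `ℓ`.  An
affine root `β = α + iδ` is recorded by the pair `(α, i)` and identified with
the affine function `x ↦ B(α, x) + i` on `V`; `β` is positive iff `i > 0` or
(`i = 0` and `α ∈ Φ₊`), and `w⁻¹β` is the affine root whose function is
`x ↦ β(w x)`.  The hypothesis `β ∈ Φ̃₊ ∩ wΦ̃₋` is: `β` is positive and the
function `x ↦ B(α, w x) + i` agrees with the function of a *negative* affine
root `(α', i')`.
-/

section
variable {V : Type*} [AddCommGroup V] [Module ℝ V]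

noncomputable def coroot (B : LinearMap.BilinForm ℝ V) (a : V) : V := (2 / B a a) • a

noncomputable def affRefl (B : LinearMap.BilinForm ℝ V) (a : V) (k : ℝ) : Equiv.Perm V :=
  Function.Involutive.toPerm (fun x => x - (B a x - k) • coroot B a) (by
    intro x
    by_cases h : B a a = 0
    · simp [coroot, h, div_zero]
    · have hBc : B a (coroot B a) = 2 := by
        simp only [coroot, map_smul, smul_eq_mul]
        field_simp
      simp only [map_sub, map_smul, smul_eq_mul, hBc]
      have : B a x - (B a x - k) * 2 - k = -(B a x - k) := by ring
      rw [this]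
      module)

noncomputable def wordLength (S : Set (Equiv.Perm V)) (g : Equiv.Perm V) : ℕ :=
  sInf {n : ℕ | ∃ l : List (Equiv.Perm V),
    l.length = n ∧ (∀ s ∈ l, s ∈ S) ∧ l.prod = g}

lemma affRefl_apply' (B : LinearMap.BilinForm ℝ V) (a : V) (k : ℝ) (x : V) :
    affRefl B a k x = x - (B a x - k) • coroot B a := rfl

lemma affRefl_inv' (B : LinearMap.BilinForm ℝ V) (a : V) (k : ℝ) :
    (affRefl B a k)⁻¹ = affRefl B a k := by
  show (affRefl B a k).symm = affRefl B a k
  exact Function.Involutive.toPerm_symm _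

noncomputable def simpleAffRefls (B : LinearMap.BilinForm ℝ V)
    (Δ : Finset V) (θ : V) : Set (Equiv.Perm V) :=
  ((fun a => affRefl B a 0) '' (Δ : Set V)) ∪ {affRefl B θ 1}

theorem inversion_set_depth_bound
    (B : LinearMap.BilinForm ℝ V)
    (hsymm : ∀ x y : V, B x y = B y x)
    (hpos : ∀ x : V, x ≠ 0 → 0 < B x x)
    (Φ : Finset V)
    (h0 : (0 : V) ∉ Φ)
    (hrefl : ∀ a ∈ Φ, ∀ b ∈ Φ, b - (B a b * (2 / B a a)) • a ∈ Φ)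
    (hint : ∀ a ∈ Φ, ∀ b ∈ Φ, ∃ n : ℤ, B a b * (2 / B a a) = (n : ℝ))
    (hspan : Submodule.span ℝ (Φ : Set V) = ⊤)
    (hirr : ¬ ∃ s t : Finset V, s.Nonempty ∧ t.Nonempty ∧
        (Φ : Set V) = ↑s ∪ ↑t ∧ ∀ a ∈ s, ∀ b ∈ t, B a b = 0)
    (f : V →ₗ[ℝ] ℝ) (hf : ∀ a ∈ Φ, f a ≠ 0)
    (Φpos : Finset V) (hΦpos : ∀ a, a ∈ Φpos ↔ a ∈ Φ ∧ 0 < f a)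
    (Δ : Finset V)
    (hΔ : ∀ a, a ∈ Δ ↔ a ∈ Φpos ∧ ¬ ∃ b ∈ Φpos, ∃ c ∈ Φpos, a = b + c)
    (θ : V) (hθ : θ ∈ Φpos)
    (hθmax : ∀ b ∈ Φ, θ - b ∈ AddSubmonoid.closure (Δ : Set V)) :
    ∃ κ : ℕ, 0 < κ ∧
      ∀ w ∈ Subgroup.closure (simpleAffRefls B Δ θ),
        ∀ a ∈ Φ, ∀ i : ℤ, 0 ≤ i →
          -- `β = a + iδ` is a positive affine root
          (0 < i ∨ (i = 0 ∧ a ∈ Φpos)) →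
          -- `w⁻¹β` is a negative affine root `(a', i')`
          (∃ a' ∈ Φ, ∃ i' : ℤ,
            (∀ x : V, B a (w x) + (i : ℝ) = B a' x + (i' : ℝ)) ∧
            (i' < 0 ∨ (i' = 0 ∧ f a' < 0))) →
          i < (κ : ℤ) * (wordLength (simpleAffRefls B Δ θ) w : ℤ) := by
  have hθΦ : θ ∈ Φ := ((hΦpos θ).1 hθ).1
  have hΔΦ : ∀ b ∈ Δ, b ∈ Φ := fun b hb => ((hΦpos b).1 ((hΔ b).1 hb).1).1
  obtain ⟨C0, hC0⟩ := Finset.exists_le (Φ.image fun b => |B θ b * (2 / B θ θ)|)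
  set C : ℝ := max C0 0 with hCdef
  have hC : ∀ b ∈ Φ, |B θ b * (2 / B θ θ)| ≤ C := fun b hb =>
    le_trans (hC0 _ (Finset.mem_image_of_mem _ hb)) (le_max_left _ _)
  have hCnn : (0 : ℝ) ≤ C := le_max_right _ _
  set S := simpleAffRefls B Δ θ with hSdef
  -- single-step transformation of an affine function
  have step : ∀ s ∈ S, ∀ a ∈ Φ, ∀ c : ℝ, ∃ a' ∈ Φ, ∃ c' : ℝ,
      (∀ x, B a (s x) + c = B a' x + c') ∧ |c' - c| ≤ C := by
    intro s hs a ha c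
    obtain ⟨b, hb, k, hk, rfl⟩ : ∃ b, b ∈ Φ ∧ ∃ k : ℝ,
        (k = 0 ∨ (k = 1 ∧ b = θ)) ∧ s = affRefl B b k := by
      rcases hs with ⟨b, hbΔ, rfl⟩ | hs
      · exact ⟨b, hΔΦ b hbΔ, 0, Or.inl rfl, rfl⟩
      · rw [Set.mem_singleton_iff] at hs; exact ⟨θ, hθΦ, 1, Or.inr ⟨rfl, rfl⟩, hs⟩
    set t : ℝ := B b a * (2 / B b b) with ht
    refine ⟨a - t • b, hrefl b hb a ha, c + k * t, ?_, ?_⟩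
    · intro x
      have hco : B a (coroot B b) = t := by
        simp only [coroot, map_smul, smul_eq_mul, ht]
        rw [hsymm a b]; ring
      rw [affRefl_apply']
      simp only [map_sub, map_smul, smul_eq_mul, hco, LinearMap.sub_apply,
        LinearMap.smul_apply]
      ring
    · have : c + k * t - c = k * t := by ring
      rw [this]
      rcases hk with rfl | ⟨rfl, rfl⟩
      · simpa using hCnn
      · rw [one_mul, ht]
        exact hC a ha
  -- iterate over a word
  have key : ∀ l : List (Equiv.Perm V), (∀ s ∈ l, s ∈ S) → ∀ a ∈ Φ, ∀ c : ℝ,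
      ∃ a' ∈ Φ, ∃ c' : ℝ,
        (∀ x, B a (l.prod x) + c = B a' x + c') ∧ |c' - c| ≤ l.length * C := by
    intro l
    induction l with
    | nil =>
      intro _ a ha c
      exact ⟨a, ha, c, fun x => by simp, by simp⟩
    | cons s l ih =>
      intro hmem a ha c
      obtain ⟨a1, ha1, c1, hfun1, hb1⟩ :=
        step s (hmem s (List.mem_cons_self)) a ha c
      obtain ⟨a2, ha2, c2, hfun2, hb2⟩ :=
        ih (fun u hu => hmem u (List.mem_cons_of_mem _ hu)) a1 ha1 c1
      refine ⟨a2, ha2, c2, ?_, ?_⟩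
      · intro x
        have : (s :: l).prod x = s (l.prod x) := by
          rw [List.prod_cons]; rfl
        rw [this, hfun1 (l.prod x), hfun2 x]
      · calc |c2 - c| ≤ |c2 - c1| + |c1 - c| := abs_sub_le _ _ _
          _ ≤ l.length * C + C := add_le_add hb2 hb1
          _ = (s :: l).length * C := by
              simp only [List.length_cons]
              push_cast; ring
  -- inverses of generators
  have inv_self : ∀ s ∈ S, s⁻¹ = s := by
    intro s hs
    rcases hs with ⟨b, _, rfl⟩ | hs
    · exact affRefl_inv' B b 0
    · rw [Set.mem_singleton_iff] at hs; rw [hs]; exact affRefl_inv' B θ 1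
  have rev_prod : ∀ l : List (Equiv.Perm V), (∀ s ∈ l, s ∈ S) →
      l.reverse.prod = l.prod⁻¹ := by
    intro l
    induction l with
    | nil => simp
    | cons s l ih =>
      intro hl
      rw [List.reverse_cons, List.prod_append, List.prod_cons, List.prod_nil, mul_one,
        ih (fun u hu => hl u (List.mem_cons_of_mem _ hu)), List.prod_cons, mul_inv_rev,
        inv_self s (hl s (List.mem_cons_self))]
  -- every element of the closure is a product of generators
  have exlist : ∀ w ∈ Subgroup.closure S,
      ∃ l : List (Equiv.Perm V), (∀ s ∈ l, s ∈ S) ∧ l.prod = w := by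
    intro w hw
    refine Subgroup.closure_induction ?_ ?_ ?_ ?_ hw
    · intro x hx; exact ⟨[x], by simpa using hx, by simp⟩
    · exact ⟨[], by simp, rfl⟩
    · rintro x y _ _ ⟨lx, hlx, rfl⟩ ⟨ly, hly, rfl⟩
      refine ⟨lx ++ ly, fun s hs => ?_, List.prod_append⟩
      rcases List.mem_append.1 hs with h | h
      exacts [hlx s h, hly s h]
    · rintro x _ ⟨l, hl, rfl⟩
      exact ⟨l.reverse, fun s hs => hl s (List.mem_reverse.mp hs), rev_prod l hl⟩
  refine ⟨⌈C⌉₊ + 1, Nat.succ_pos _, ?_⟩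
  intro w hw a ha i hi hposb hneg
  obtain ⟨a'', ha''Φ, i'', hfun'', hneg''⟩ := hneg
  obtain ⟨lw, hlwS, hlwprod⟩ := exlist w hw
  have hne : {n : ℕ | ∃ l : List (Equiv.Perm V),
      l.length = n ∧ (∀ s ∈ l, s ∈ S) ∧ l.prod = w}.Nonempty :=
    ⟨lw.length, lw, rfl, hlwS, hlwprod⟩
  obtain ⟨l, hlen, hlS, hlprod⟩ :
      ∃ l : List (Equiv.Perm V), l.length = wordLength S w ∧
        (∀ s ∈ l, s ∈ S) ∧ l.prod = w := Nat.sInf_mem hne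
  obtain ⟨a', ha', c', hfun', hbnd⟩ := key l hlS a ha (i : ℝ)
  rw [hlen] at hbnd
  -- identify c' with i''
  have h0 := hfun' 0
  rw [hlprod] at h0
  have h1 := hfun'' 0
  have hz : (B a') (0 : V) = 0 := map_zero _
  have hz' : (B a'') (0 : V) = 0 := map_zero _
  rw [hz, zero_add] at h0
  rw [hz', zero_add] at h1
  have hc' : c' = (i'' : ℝ) := by linarith
  rw [hc'] at hbnd
  have hi''le : (i'' : ℝ) ≤ 0 := by
    rcases hneg'' with h | ⟨h, _⟩
    · exact_mod_cast le_of_lt h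
    · simp [h]
  have hile : (i : ℝ) ≤ (wordLength S w : ℝ) * C := by
    have : (i : ℝ) ≤ |(i'' : ℝ) - (i : ℝ)| := by
      rw [abs_sub_comm, abs_of_nonneg (by linarith [(Int.cast_nonneg_iff.mpr hi : (0:ℝ) ≤ i)])]
      linarith [(Int.cast_nonneg_iff.mpr hi : (0:ℝ) ≤ (i : ℝ))]
    linarith
  -- rule out length zero
  rcases Nat.eq_zero_or_pos (wordLength S w) with hn0 | hn1
  · exfalso
    rw [hn0] at hlen
    have hlnil : l = [] := List.length_eq_zero_iff.mp hlen
    have hw1 : w = 1 := by rw [← hlprod, hlnil, List.prod_nil]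
    have hi0 : i = 0 := by
      have h2 : (i : ℝ) ≤ 0 := by
        rw [hn0] at hile; simpa using hile
      have h3 : i ≤ 0 := by exact_mod_cast h2
      omega
    obtain ⟨-, haP⟩ : i = 0 ∧ a ∈ Φpos := by
      rcases hposb with h | h
      · omega
      · exact h
    have hii'' : i'' = 0 := by
      rcases hneg'' with h | ⟨h, _⟩
      · -- from hbnd with n = 0 : i'' = i = 0
        rw [hn0] at hbnd
        simp only [Nat.cast_zero, zero_mul, abs_nonpos_iff, sub_eq_zero] at hbnd
        have : (i'' : ℝ) = 0 := by rw [hbnd, hi0]; simp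
        exact_mod_cast this
      · exact h
    have hfa'' : f a'' < 0 := by
      rcases hneg'' with h | ⟨-, h⟩
      · omega
      · exact h
    -- w = 1 gives a = a''
    have heq : ∀ x : V, B a x = B a'' x := by
      intro x
      have := hfun'' x
      rw [hw1] at this
      simp only [Equiv.Perm.coe_one, id_eq, hi0, hii''] at this
      simpa using this
    have haa : a = a'' := by
      by_contra hne'
      have h2 : B (a - a'') (a - a'') = 0 := by
        simp only [map_sub, LinearMap.sub_apply]
        linarith [heq a, heq a'']
      have := hpos (a - a'') (sub_ne_zero.mpr hne')
      rw [h2] at this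
      exact lt_irrefl _ this
    have : 0 < f a := ((hΦpos a).1 haP).2
    rw [haa] at this
    linarith
  · -- main estimate
    have hCκ : C < ((⌈C⌉₊ : ℝ) + 1) := lt_of_le_of_lt (Nat.le_ceil C) (by linarith)
    have hnp : (0 : ℝ) < (wordLength S w : ℝ) := by exact_mod_cast hn1
    have : (i : ℝ) < ((⌈C⌉₊ + 1 : ℕ) : ℝ) * (wordLength S w : ℝ) := by
      calc (i : ℝ) ≤ (wordLength S w : ℝ) * C := hile
        _ < (wordLength S w : ℝ) * ((⌈C⌉₊ : ℝ) + 1) := by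
            exact mul_lt_mul_of_pos_left hCκ hnp
        _ = ((⌈C⌉₊ + 1 : ℕ) : ℝ) * (wordLength S w : ℝ) := by push_cast; ring
    exact_mod_cast this

end
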